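/- arXiv:2004.05126 — 2 statements merged into one kernel-verified Lean document; each statement's English description precedes it below -/
import Mathlib

section
/- Suppose α is irrational with convergents p_n/q_n and there is a constant M and N₀ such that log(q_{n+1})/q_n < M for all n ≥ N₀. Then for every ε > M/(2π·0.05) and all sufficiently large |k|, one has |e^{2πikα} − 1| > e^{−2π|k|·0.09·ε}. -/
noncomputable def cfq (α : ℝ) (n : ℕ) : ℝ := (GenContFract.of α).dens n

section Aux
open GenContFract

lemma nt (α : ℝ) (hirr : Irrational α) (n : ℕ) : ¬(GenContFract.of α).TerminatedAt n := by
  intro h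
  obtain ⟨q, hq⟩ := (GenContFract.terminates_iff_rat α).1 ⟨n, h⟩
  exact hirr ⟨q, hq.symm⟩

lemma qfib (α : ℝ) (n : ℕ) (hirr : Irrational α) : (Nat.fib (n+1) : ℝ) ≤ cfq α n :=
  succ_nth_fib_le_of_nth_den (Or.inr (nt α hirr _))

lemma qpos (α : ℝ) (hirr : Irrational α) (n : ℕ) : 1 ≤ cfq α n := by
  have := qfib α n hirr
  have h1 : (1:ℝ) ≤ (Nat.fib (n+1) : ℝ) := by
    exact_mod_cast Nat.fib_pos.2 n.succ_pos
  linarith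

lemma qmono (α : ℝ) : Monotone (cfq α) :=
  monotone_nat_of_le_succ (fun _ => of_den_mono)

lemma qint (α : ℝ) (n : ℕ) :
    (∃ z : ℤ, (GenContFract.of α).nums n = (z:ℝ)) ∧ (∃ z : ℤ, (GenContFract.of α).dens n = (z:ℝ)) ∧
    (∃ z : ℤ, (GenContFract.of α).nums (n+1) = (z:ℝ)) ∧ (∃ z : ℤ, (GenContFract.of α).dens (n+1) = (z:ℝ)) := by
  induction n with
  | zero =>
    refine ⟨⟨⌊α⌋, by simp [of_h_eq_floor]⟩, ⟨1, by simp⟩, ?_, ?_⟩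
    · rcases h0 : (GenContFract.of α).s.get? 0 with _ | gp
      · exact ⟨⌊α⌋, by
          rw [num_eq_conts_a, nth_cont_eq_succ_nth_contAux]
          have : (GenContFract.of α).contsAux 2 = (GenContFract.of α).contsAux 1 :=
            contsAux_stable_step_of_terminated h0
          simp [this, of_h_eq_floor]⟩
      · obtain ⟨z, hz⟩ := exists_int_eq_of_partDen (partDen_eq_s_b h0)
        exact ⟨z * ⌊α⌋ + 1, by
          rw [first_num_eq h0, of_partNum_eq_one (partNum_eq_s_a h0), of_h_eq_floor, hz]
          push_cast; ring⟩
    · rcases h0 : (GenContFract.of α).s.get? 0 with _ | gp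
      · exact ⟨1, by
          rw [den_eq_conts_b, nth_cont_eq_succ_nth_contAux]
          have : (GenContFract.of α).contsAux 2 = (GenContFract.of α).contsAux 1 :=
            contsAux_stable_step_of_terminated h0
          simp [this]⟩
      · obtain ⟨z, hz⟩ := exists_int_eq_of_partDen (partDen_eq_s_b h0)
        exact ⟨z, by rw [first_den_eq h0, hz]⟩
  | succ n ih =>
    obtain ⟨⟨a, ha⟩, ⟨b, hb⟩, ⟨a', ha'⟩, ⟨b', hb'⟩⟩ := ih
    refine ⟨⟨a', ha'⟩, ⟨b', hb'⟩, ?_, ?_⟩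
    · rcases h0 : (GenContFract.of α).s.get? (n+1) with _ | gp
      · exact ⟨a', by
          rw [num_eq_conts_a, nth_cont_eq_succ_nth_contAux]
          have : (GenContFract.of α).contsAux (n+3) = (GenContFract.of α).contsAux (n+2) :=
            contsAux_stable_step_of_terminated h0
          rw [this, ← nth_cont_eq_succ_nth_contAux, ← num_eq_conts_a, ha']⟩
      · obtain ⟨z, hz⟩ := exists_int_eq_of_partDen (partDen_eq_s_b h0)
        exact ⟨z * a' + a, by
          rw [nums_recurrence h0 ha ha', of_partNum_eq_one (partNum_eq_s_a h0), hz]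
          push_cast; ring⟩
    · rcases h0 : (GenContFract.of α).s.get? (n+1) with _ | gp
      · exact ⟨b', by
          rw [den_eq_conts_b, nth_cont_eq_succ_nth_contAux]
          have : (GenContFract.of α).contsAux (n+3) = (GenContFract.of α).contsAux (n+2) :=
            contsAux_stable_step_of_terminated h0
          rw [this, ← nth_cont_eq_succ_nth_contAux, ← den_eq_conts_b, hb']⟩
      · obtain ⟨z, hz⟩ := exists_int_eq_of_partDen (partDen_eq_s_b h0)
        exact ⟨z * b' + b, by
          rw [dens_recurrence h0 hb hb', of_partNum_eq_one (partNum_eq_s_a h0), hz]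
          push_cast; ring⟩

lemma qrec (α : ℝ) (hirr : Irrational α) (n : ℕ) :
    cfq α (n+1) + cfq α n ≤ cfq α (n+2) := by
  rcases h0 : (GenContFract.of α).s.get? (n+1) with _ | gp
  · exact absurd h0 (nt α hirr (n+1))
  · have hrec := dens_recurrence h0 rfl rfl (g := GenContFract.of α)
    have ha : gp.a = 1 := of_partNum_eq_one (partNum_eq_s_a h0)
    have hb : (1:ℝ) ≤ gp.b := of_one_le_get?_partDen (partDen_eq_s_b h0)
    have h1 : 1 ≤ cfq α (n+1) := qpos α hirr (n+1)
    show cfq α (n+1) + cfq α n ≤ (GenContFract.of α).dens (n+2)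
    rw [hrec, ha]
    have e1 : (GenContFract.of α).dens (n+1) = cfq α (n+1) := rfl
    have e2 : (GenContFract.of α).dens n = cfq α n := rfl
    rw [e1, e2]
    nlinarith [qpos α hirr n]

lemma detm (α : ℝ) (hirr : Irrational α) (n : ℕ) :
    (GenContFract.of α).nums n * cfq α (n+1) - cfq α n * (GenContFract.of α).nums (n+1)
      = (-1)^(n+1) := by
  have := SimpContFract.determinant (s := SimpContFract.of α) (n := n) (nt α hirr n)
  exact this

lemma approx (α : ℝ) (hirr : Irrational α) (n : ℕ) :
    |α - (GenContFract.of α).nums n / cfq α n| ≤ 1 / (cfq α n * cfq α (n+1)) := by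
  have h := abs_sub_convs_le (v := α) (n := n) (nt α hirr n)
  rwa [conv_eq_num_div_den] at h

set_option maxHeartbeats 1000000 in
lemma core (α : ℝ) (hirr : Irrational α) (n : ℕ) (k p : ℤ)
    (hk : cfq α n ≤ |(k:ℝ)|) (hk2 : |(k:ℝ)| < cfq α (n+1)) :
    1 / (2 * cfq α n * cfq α (n+1)) ≤ |(k:ℝ) * α - p| := by
  obtain ⟨⟨za, ha⟩, ⟨zb, hb⟩, ⟨za', ha'⟩, ⟨zb', hb'⟩⟩ := qint α n
  set A := (GenContFract.of α).nums n with hA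
  set A' := (GenContFract.of α).nums (n+1) with hA'
  have hB : cfq α n = (GenContFract.of α).dens n := rfl
  have hB' : cfq α (n+1) = (GenContFract.of α).dens (n+1) := rfl
  set B := cfq α n with hBdef
  set B' := cfq α (n+1) with hB'def
  set B'' := cfq α (n+2) with hB''def
  have hbB : B = (zb:ℝ) := hB.trans hb
  have hbB' : B' = (zb':ℝ) := hB'.trans hb'
  have hBpos : 1 ≤ B := qpos α hirr n
  have hB'pos : 1 ≤ B' := qpos α hirr (n+1)
  have hB''pos : 1 ≤ B'' := qpos α hirr (n+2)
  have hB0 : (0:ℝ) < B := by linarith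
  have hB'0 : (0:ℝ) < B' := by linarith
  have hB''0 : (0:ℝ) < B'' := by linarith
  have hrec : B' + B ≤ B'' := qrec α hirr n
  set ξ := B * α - A with hxi_def
  set ξ' := B' * α - A' with hxi'_def
  -- |ξ| ≤ 1/B'
  have hxi : |ξ| ≤ 1 / B' := by
    have happ : |α - A / B| ≤ 1 / (B * B') := approx α hirr n
    have e : ξ = B * (α - A / B) := by rw [hxi_def]; field_simp
    rw [e, abs_mul, abs_of_pos hB0]
    calc B * |α - A / B| ≤ B * (1 / (B * B')) := by nlinarith [abs_nonneg (α - A/B)]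
      _ = 1 / B' := by field_simp
  have hxi' : |ξ'| ≤ 1 / B'' := by
    have happ : |α - A' / B'| ≤ 1 / (B' * B'') := approx α hirr (n+1)
    have e : ξ' = B' * (α - A' / B') := by rw [hxi'_def]; field_simp
    rw [e, abs_mul, abs_of_pos hB'0]
    calc B' * |α - A' / B'| ≤ B' * (1 / (B' * B'')) := by nlinarith [abs_nonneg (α - A'/B')]
      _ = 1 / B'' := by field_simp
  have hinvB' : 1 / B' * B' = 1 := by field_simp
  have hinvB'' : 1 / B'' * B'' = 1 := by field_simp
  by_cases hD : k * za - p * zb = 0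
  · -- degenerate case: p/k equals the n-th convergent
    -- lower bound |ξ| ≥ 1/(2B') using the determinant
    have hdet : A * B' - B * A' = (-1)^(n+1) := detm α hirr n
    have hdet1 : |B' * ξ - B * ξ'| = 1 := by
      have e : B' * ξ - B * ξ' = -(A * B' - B * A') := by rw [hxi_def, hxi'_def]; ring
      rw [e, hdet, abs_neg, abs_pow, abs_neg, abs_one, one_pow]
    have h2B : 2 * B ≤ B'' := by
      have : B ≤ B' := qmono α (Nat.le_succ n)
      linarith
    have hBxi' : B * |ξ'| ≤ 1 / 2 := by
      calc B * |ξ'| ≤ B * (1 / B'') := by nlinarith [abs_nonneg ξ']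
        _ ≤ 1 / 2 := by
          rw [mul_one_div, div_le_div_iff₀ hB''0 two_pos]
          linarith
    have hxilow : 1 / (2 * B') ≤ |ξ| := by
      have h3 : 1 ≤ B' * |ξ| + B * |ξ'| := by
        calc (1:ℝ) = |B' * ξ - B * ξ'| := hdet1.symm
          _ ≤ |B' * ξ| + |B * ξ'| := abs_sub _ _
          _ = B' * |ξ| + B * |ξ'| := by rw [abs_mul, abs_mul, abs_of_pos hB'0, abs_of_pos hB0]
      have h4 : 1 / 2 ≤ B' * |ξ| := by linarith
      rw [div_le_iff₀ (by positivity : (0:ℝ) < 2 * B')]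
      linarith [h4]
    -- k α - p = (k / B) ξ
    have hzz : (k:ℝ) * A = (p:ℝ) * B := by
      have : k * za = p * zb := by omega
      rw [ha, hbB]
      exact_mod_cast congrArg (fun z : ℤ => (z : ℝ)) this
    have hident : B * ((k:ℝ) * α - p) = (k:ℝ) * ξ := by
      rw [hxi_def]; linarith [hzz]
    have hkB : B ≤ |(k:ℝ)| := hk
    have habs : B * |(k:ℝ) * α - p| = |(k:ℝ)| * |ξ| := by
      calc B * |(k:ℝ) * α - p| = |B| * |(k:ℝ) * α - p| := by rw [abs_of_pos hB0]
        _ = |B * ((k:ℝ) * α - p)| := (abs_mul _ _).symm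
        _ = |(k:ℝ) * ξ| := by rw [hident]
        _ = |(k:ℝ)| * |ξ| := abs_mul _ _
    have h5 : B * (1 / (2 * B')) ≤ B * |(k:ℝ) * α - p| := by
      rw [habs]
      calc B * (1 / (2 * B')) ≤ |(k:ℝ)| * (1 / (2 * B')) := by
            have : (0:ℝ) ≤ 1 / (2*B') := by positivity
            nlinarith
        _ ≤ |(k:ℝ)| * |ξ| := by nlinarith [abs_nonneg (k:ℝ), le_trans hB0.le hkB]
    have h6 : 1 / (2 * B') ≤ |(k:ℝ) * α - p| := le_of_mul_le_mul_left (by linarith) hB0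
    calc 1 / (2 * B * B') ≤ 1 / (2 * B') := by
          apply div_le_div_of_nonneg_left one_pos.le (by positivity)
          nlinarith
      _ ≤ |(k:ℝ) * α - p| := h6
  · -- main case: the linear form is a nonzero integer
    have hD1 : (1:ℝ) ≤ |(k:ℝ) * A - (p:ℝ) * B| := by
      rw [ha, hbB]
      have h1 : 1 ≤ |k * za - p * zb| := Int.one_le_abs (by omega)
      calc (1:ℝ) = ((1:ℤ):ℝ) := by norm_num
        _ ≤ ((|k * za - p * zb| : ℤ) : ℝ) := by exact_mod_cast h1
        _ = |((k * za - p * zb : ℤ) : ℝ)| := by rw [Int.cast_abs]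
        _ = |(k:ℝ) * (za:ℝ) - (p:ℝ) * (zb:ℝ)| := by push_cast; ring
    have hident : B * ((k:ℝ) * α - p) = (k:ℝ) * ξ + ((k:ℝ) * A - (p:ℝ) * B) := by
      rw [hxi_def]; ring
    have hkb' : (|(k:ℝ)|) + 1 ≤ B' := by
      have h1 : |(k:ℝ)| = ((|k| : ℤ) : ℝ) := by rw [Int.cast_abs]
      rw [h1, hbB'] at hk2 ⊢
      have : |k| < zb' := by exact_mod_cast hk2
      exact_mod_cast this
    have hklow : |(k:ℝ)| * |ξ| ≤ 1 - 1 / B' := by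
      calc |(k:ℝ)| * |ξ| ≤ (B' - 1) * (1 / B') := by
            apply mul_le_mul (by linarith) hxi (abs_nonneg _) (by linarith)
        _ = 1 - 1 / B' := by field_simp
    have h3 : 1 / B' ≤ B * |(k:ℝ) * α - p| := by
      have e1 : B * |(k:ℝ) * α - p| = |(k:ℝ) * ξ + ((k:ℝ) * A - (p:ℝ) * B)| := by
        calc B * |(k:ℝ) * α - p| = |B| * |(k:ℝ) * α - p| := by rw [abs_of_pos hB0]
          _ = |B * ((k:ℝ) * α - p)| := (abs_mul _ _).symm
          _ = |(k:ℝ) * ξ + ((k:ℝ) * A - (p:ℝ) * B)| := by rw [hident]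
      rw [e1]
      have := abs_sub_abs_le_abs_sub ((k:ℝ) * A - (p:ℝ) * B) (-((k:ℝ) * ξ))
      have e2 : (k:ℝ) * A - (p:ℝ) * B - -((k:ℝ) * ξ) = (k:ℝ) * ξ + ((k:ℝ) * A - (p:ℝ) * B) := by ring
      rw [e2, abs_neg, abs_mul] at this
      linarith
    rw [div_le_iff₀ (by positivity : (0:ℝ) < 2 * B * B')] at *
    rw [div_le_iff₀ hB'0] at h3
    nlinarith [abs_nonneg ((k:ℝ) * α - p)]

end Aux

open GenContFract in
set_option maxHeartbeats 1000000 in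
/-- If `log(q_{n+1})/q_n < M` eventually, then for each `ε > M/(2π·0.05)` and
all sufficiently large `|k|`, `|e^{2πikα} − 1| > e^{−2π|k|·0.09·ε}`. -/
theorem stmt6 (α : ℝ) (hirr : Irrational α) (hα : α ∈ Set.Ioo (0:ℝ) 1)
    (M : ℝ) (N₀ : ℕ) (hM : ∀ n : ℕ, N₀ ≤ n → Real.log (cfq α (n+1)) / cfq α n < M) :
    ∀ ε : ℝ, M / (2 * Real.pi * 0.05) < ε →
      ∃ K : ℕ, ∀ k : ℤ, K ≤ k.natAbs →
        Real.exp (-(2 * Real.pi) * |(k : ℝ)| * 0.09 * ε) <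
          ‖Complex.exp (2 * Real.pi * Complex.I * k * α) - 1‖ := by
  intro ε hε
  have hpi := Real.pi_pos
  -- M is positive
  have hM0 : 0 < M := by
    set n₁ := max N₀ 1 with hn₁
    have h2 : (2:ℝ) ≤ cfq α (n₁+1) := by
      have hfib : (Nat.fib (n₁+2) : ℝ) ≤ cfq α (n₁+1) := qfib α (n₁+1) hirr
      have : 2 ≤ Nat.fib (n₁+2) := by
        have := Nat.fib_mono (show 3 ≤ n₁+2 by omega)
        simpa [show Nat.fib 3 = 2 by decide] using this
      have : (2:ℝ) ≤ (Nat.fib (n₁+2) : ℝ) := by exact_mod_cast this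
      linarith
    have hlogpos : 0 < Real.log (cfq α (n₁+1)) := Real.log_pos (by linarith)
    have hq1 : 0 < cfq α n₁ := lt_of_lt_of_le one_pos (qpos α hirr n₁)
    exact lt_trans (div_pos hlogpos hq1) (hM n₁ (le_max_left _ _))
  have hε0 : 0 < ε := lt_trans (div_pos hM0 (by nlinarith)) hε
  have hMε : M < 2 * Real.pi * 0.05 * ε := by
    rw [div_lt_iff₀ (by nlinarith : (0:ℝ) < 2 * Real.pi * 0.05)] at hε
    linarith
  set c := 2 * Real.pi * 0.09 * ε with hc
  set δ := c - M with hδdef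
  have hδ : 0 < δ := by rw [hδdef, hc]; nlinarith
  clear_value δ
  -- choose K
  refine ⟨max (max (⌈cfq α N₀⌉₊ + 1) 1) (⌈4/δ^2⌉₊ + 1), ?_⟩
  intro k hK
  set x := |(k:ℝ)| with hxdef
  have hxnat : (k.natAbs : ℝ) = x := by rw [hxdef, Nat.cast_natAbs, Int.cast_abs]
  have hx1 : (1:ℝ) ≤ x := by
    have : 1 ≤ k.natAbs := by omega
    rw [← hxnat]; exact_mod_cast this
  have hx0 : (0:ℝ) < x := by linarith
  have hxq : cfq α N₀ ≤ x := by
    have h1 : ⌈cfq α N₀⌉₊ + 1 ≤ k.natAbs := by omega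
    have h2 : (⌈cfq α N₀⌉₊ : ℝ) ≤ x := by rw [← hxnat]; exact_mod_cast le_trans (Nat.le_succ _) h1
    exact le_trans (Nat.le_ceil _) h2
  have hxδ : 4/δ^2 ≤ x := by
    have h1 : ⌈4/δ^2⌉₊ + 1 ≤ k.natAbs := by omega
    have h2 : (⌈4/δ^2⌉₊ : ℝ) ≤ x := by rw [← hxnat]; exact_mod_cast le_trans (Nat.le_succ _) h1
    exact le_trans (Nat.le_ceil _) h2
  clear_value x
  -- find the scale n
  have hex : ∃ m, x < cfq α (m+1) := by
    refine ⟨max (⌈x⌉₊ + 1) 5, ?_⟩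
    set m := max (⌈x⌉₊ + 1) 5 with hm
    have h1 : (m:ℝ) ≤ (Nat.fib m : ℝ) := by exact_mod_cast Nat.le_fib_self (le_max_right _ 5)
    have h2 : (Nat.fib m : ℝ) ≤ (Nat.fib (m+2) : ℝ) := by
      exact_mod_cast Nat.fib_mono (Nat.le_add_right m 2)
    have h3 : (Nat.fib (m+2) : ℝ) ≤ cfq α (m+1) := qfib α (m+1) hirr
    have h4 : x < (m:ℝ) := by
      have : x ≤ (⌈x⌉₊ : ℝ) := Nat.le_ceil x
      have h5 : (⌈x⌉₊ + 1 : ℕ) ≤ m := le_max_left _ _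
      have h6 : ((⌈x⌉₊ : ℝ) + 1) ≤ (m:ℝ) := by exact_mod_cast h5
      linarith
    linarith
  set n := Nat.find hex with hn
  have hn2 : x < cfq α (n+1) := Nat.find_spec hex
  have hnN₀ : N₀ ≤ n := by
    by_contra h
    push_neg at h
    have : cfq α (n+1) ≤ cfq α N₀ := qmono α (by omega)
    linarith
  have hn1 : cfq α n ≤ x := by
    rcases Nat.eq_zero_or_pos n with h0 | h0
    · rw [h0]
      show (GenContFract.of α).dens 0 ≤ x
      simp only [zeroth_den_eq_one]
      exact hx1
    · have hlt : n - 1 < Nat.find hex := by rw [← hn]; omega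
      have hmin := Nat.find_min hex hlt
      push_neg at hmin
      have e : n - 1 + 1 = n := by omega
      rwa [e] at hmin
  -- apply the core diophantine bound
  set p := round ((k:ℝ) * α) with hp
  have hcore : 1 / (2 * cfq α n * cfq α (n+1)) ≤ |(k:ℝ) * α - p| := core α hirr n k p (by rw [← hxdef]; exact hn1) (by rw [← hxdef]; exact hn2)
  -- bound the denominators
  have hq1 : 0 < cfq α n := lt_of_lt_of_le one_pos (qpos α hirr n)
  have hq2 : 0 < cfq α (n+1) := lt_of_lt_of_le one_pos (qpos α hirr (n+1))
  have hqub : cfq α (n+1) ≤ Real.exp (M * x) := by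
    have h1 := hM n hnN₀
    rw [div_lt_iff₀ hq1] at h1
    have h2 : cfq α (n+1) = Real.exp (Real.log (cfq α (n+1))) := (Real.exp_log hq2).symm
    rw [h2]
    apply Real.exp_le_exp.2
    nlinarith
  have hγ : Real.exp (-(M*x)) / (2 * x) ≤ |(k:ℝ) * α - p| := by
    refine le_trans ?_ hcore
    rw [div_le_div_iff₀ (by positivity) (by positivity)]
    have e1 : Real.exp (-(M*x)) * Real.exp (M*x) = 1 := by
      rw [← Real.exp_add]; simp
    have hexp0 : 0 < Real.exp (-(M*x)) := Real.exp_pos _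
    calc Real.exp (-(M*x)) * (2 * cfq α n * cfq α (n+1))
        ≤ Real.exp (-(M*x)) * (2 * x * Real.exp (M*x)) := by
          nlinarith [mul_le_mul hn1 hqub hq2.le hx0.le, Real.exp_pos (-(M*x))]
      _ = 1 * (2 * x) := by
          rw [show Real.exp (-(M*x)) * (2 * x * Real.exp (M*x))
              = (Real.exp (-(M*x)) * Real.exp (M*x)) * (2*x) by ring, e1]
  set t := (k:ℝ) * α - p with ht
  have htle : |t| ≤ 1/2 := by rw [ht, hp]; exact abs_sub_round _
  clear_value t
  have harg : (2 * Real.pi * Complex.I * k * α : ℂ)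
      = ((2 * Real.pi * ((k:ℝ) * α) : ℝ) : ℂ) * Complex.I := by push_cast; ring
  set θ := 2 * Real.pi * ((k:ℝ) * α) with hθ
  clear_value θ
  have hre : (Complex.exp (2 * Real.pi * Complex.I * k * α) - 1).re = Real.cos θ - 1 := by
    rw [harg]
    simp [Complex.exp_ofReal_mul_I_re]
  have him : (Complex.exp (2 * Real.pi * Complex.I * k * α) - 1).im = Real.sin θ := by
    rw [harg]
    simp [Complex.exp_ofReal_mul_I_im]
  have hnorm_im : |Real.sin θ| ≤ ‖Complex.exp (2 * Real.pi * Complex.I * k * α) - 1‖ := by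
    rw [← him]; exact Complex.abs_im_le_norm _
  have hnorm_re : |Real.cos θ - 1| ≤ ‖Complex.exp (2 * Real.pi * Complex.I * k * α) - 1‖ := by
    rw [← hre]; exact Complex.abs_re_le_norm _
  have hθt : θ = 2 * Real.pi * t + (p:ℝ) * (2 * Real.pi) := by rw [hθ, ht]; ring
  have hsin : Real.sin θ = Real.sin (2 * Real.pi * t) := by
    rw [hθt, Real.sin_add_int_mul_two_pi]
  have hcos : Real.cos θ = Real.cos (2 * Real.pi * t) := by
    rw [hθt, Real.cos_add_int_mul_two_pi]
  have hgoal_eq : -(2*Real.pi)*x*0.09*ε = -(c*x) := by rw [hc]; ring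
  rw [hgoal_eq]
  have hcx : 0 < c * x := by rw [hc]; nlinarith
  by_cases hcase : |t| ≤ 1/4
  · -- use the imaginary part (sine) bound
    have hsin4 : 4 * |t| ≤ |Real.sin (2*Real.pi*t)| := by
      have h0 : 0 ≤ 2 * Real.pi * |t| := by positivity
      have h1 : 2 * Real.pi * |t| ≤ Real.pi / 2 := by nlinarith
      have h2 := Real.mul_le_sin h0 h1
      have h3 : 2/Real.pi * (2*Real.pi*|t|) = 4 * |t| := by field_simp; ring
      have h4 : |Real.sin (2*Real.pi*t)| = |Real.sin (2*Real.pi*|t|)| := by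
        rcases abs_cases t with ⟨he, _⟩ | ⟨he, _⟩
        · rw [he]
        · rw [he, show 2*Real.pi*(-t) = -(2*Real.pi*t) by ring, Real.sin_neg, abs_neg]
      rw [h4]
      calc 4*|t| = 2/Real.pi * (2*Real.pi*|t|) := h3.symm
        _ ≤ Real.sin (2*Real.pi*|t|) := h2
        _ ≤ |Real.sin (2*Real.pi*|t|)| := le_abs_self _
    have hsq : Real.sqrt x * Real.sqrt x = x := Real.mul_self_sqrt hx0.le
    have hsq2 : 2/δ ≤ Real.sqrt x := by
      have h5 : Real.sqrt (4/δ^2) ≤ Real.sqrt x := Real.sqrt_le_sqrt hxδ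
      have h4 : Real.sqrt (4/δ^2) = 2/δ := by
        rw [show (4:ℝ)/δ^2 = (2/δ)^2 by ring]
        exact Real.sqrt_sq (by positivity)
      rw [h4] at h5; linarith
    have hlogx : Real.log x ≤ δ * x := by
      have h1 : Real.log x = 2 * Real.log (Real.sqrt x) := by
        rw [Real.log_sqrt hx0.le]; ring
      have h2 : Real.log (Real.sqrt x) ≤ Real.sqrt x - 1 :=
        Real.log_le_sub_one_of_pos (by positivity)
      have hδs : (2:ℝ) ≤ Real.sqrt x * δ := by rwa [div_le_iff₀ hδ] at hsq2
      have h3 : 2 * Real.sqrt x ≤ δ * x := by nlinarith [Real.sqrt_nonneg x, hδs, hsq]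
      linarith
    have hxexp : x ≤ Real.exp (δ * x) := by
      calc x = Real.exp (Real.log x) := (Real.exp_log hx0).symm
        _ ≤ Real.exp (δ * x) := Real.exp_le_exp.2 hlogx
    have hkey : Real.exp (-(c*x)) * x < 2 * Real.exp (-(M*x)) := by
      calc Real.exp (-(c*x)) * x ≤ Real.exp (-(c*x)) * Real.exp (δ*x) := by
            nlinarith [Real.exp_pos (-(c*x))]
        _ = Real.exp (-(M*x)) := by rw [← Real.exp_add]; congr 1; rw [hδdef]; ring
        _ < 2 * Real.exp (-(M*x)) := by nlinarith [Real.exp_pos (-(M*x))]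
    have final : Real.exp (-(c*x)) < 4 * (Real.exp (-(M*x))/(2*x)) := by
      rw [show 4 * (Real.exp (-(M*x))/(2*x)) = 2*Real.exp (-(M*x))/x by ring]
      rw [lt_div_iff₀ hx0]
      exact hkey
    calc Real.exp (-(c*x)) < 4 * (Real.exp (-(M*x))/(2*x)) := final
      _ ≤ 4 * |t| := by linarith [hγ]
      _ ≤ |Real.sin (2*Real.pi*t)| := hsin4
      _ = |Real.sin θ| := by rw [hsin]
      _ ≤ _ := hnorm_im
  · -- use the real part (cosine) bound
    push_neg at hcase
    have hcosle : Real.cos (2*Real.pi*t) ≤ 0 := by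
      have he : Real.cos (2*Real.pi*t) = Real.cos (2*Real.pi*|t|) := by
        rcases abs_cases t with ⟨he,_⟩|⟨he,_⟩
        · rw [he]
        · rw [he, show 2*Real.pi*(-t) = -(2*Real.pi*t) by ring, Real.cos_neg]
      rw [he]
      apply Real.cos_nonpos_of_pi_div_two_le_of_le
      · have h6 := mul_le_mul_of_nonneg_left hcase.le (show (0:ℝ) ≤ 2*Real.pi by positivity)
        linarith [h6]
      · have h7 := mul_le_mul_of_nonneg_left htle (show (0:ℝ) ≤ 2*Real.pi by positivity)
        linarith [h7]
    have h1 : (1:ℝ) ≤ |Real.cos θ - 1| := by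
      rw [hcos, abs_sub_comm, abs_of_nonneg (by linarith)]
      linarith
    have h2 : Real.exp (-(c*x)) < 1 := by
      calc Real.exp (-(c*x)) < Real.exp 0 := Real.exp_lt_exp.2 (by linarith)
        _ = 1 := Real.exp_zero
    calc Real.exp (-(c*x)) < 1 := h2
      _ ≤ |Real.cos θ - 1| := h1
      _ ≤ _ := hnorm_re
end

section
/- Cohomological equation via Fourier series: let α be irrational and suppose there exist δ ∈ (0, ε) and k₀ such that |e^{2πikα} − 1| > e^{−2π|k|δ} for all |k| ≥ k₀. Let v be a bounded holomorphic 1-periodic function on the strip {|Im z| < ε} with zero mean ∫₀¹ v(x)dx = 0. Then for every ε' < ε − δ there exists a holomorphic 1-periodic function h on {|Im z| < ε'} solving h(z + α) − h(z) = v(z), unique up to an additive constant. -/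
open Complex

noncomputable section CohomologicalAux

/-- The exponential `e^{2πikz}`. -/
def ek (k : ℤ) (z : ℂ) : ℂ := Complex.exp (2 * Real.pi * Complex.I * k * z)

lemma differentiable_ek (k : ℤ) : Differentiable ℂ (ek k) := by
  unfold ek; fun_prop

lemma ek_add (k : ℤ) (z w : ℂ) : ek k (z + w) = ek k z * ek k w := by
  rw [ek, ek, ek, ← Complex.exp_add]
  congr 1; ring

lemma ek_zero (z : ℂ) : ek 0 z = 1 := by simp [ek]

lemma ek_neg_mul (k : ℤ) (z : ℂ) : ek (-k) z * ek k z = 1 := by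
  rw [ek, ek, ← Complex.exp_add,
    show 2 * (Real.pi:ℂ) * Complex.I * ((-k : ℤ):ℂ) * z
        + 2 * Real.pi * Complex.I * (k:ℂ) * z = 0 by push_cast; ring]
  exact Complex.exp_zero

lemma ek_one (k : ℤ) : ek k 1 = 1 := by
  rw [ek, mul_one,
    show 2 * (Real.pi:ℂ) * Complex.I * (k:ℂ) = (k:ℂ) * (2 * Real.pi * Complex.I) by ring]
  exact Complex.exp_int_mul_two_pi_mul_I k

lemma ek_norm (k : ℤ) (z : ℂ) : ‖ek k z‖ = Real.exp (-(2 * Real.pi) * (k:ℝ) * z.im) := by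
  rw [ek, Complex.norm_exp]
  congr 1
  have : (2 * (Real.pi:ℂ) * Complex.I * (k:ℂ) * z)
      = ((2 * Real.pi * (k:ℝ) : ℝ) : ℂ) * z * Complex.I := by push_cast; ring
  rw [this]
  simp [Complex.mul_re, Complex.mul_im]

lemma summable_exp_neg_abs (a : ℝ) (ha : 0 < a) :
    Summable (fun k : ℤ => Real.exp (-a * |(k:ℝ)|)) := by
  have key : ∀ k : ℤ, Real.exp (-a * |(k:ℝ)|) = Real.exp (-a) ^ k.natAbs := by
    intro k
    rw [← Real.exp_nat_mul]
    congr 1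
    have h1 : ((k.natAbs : ℕ) : ℝ) = |(k:ℝ)| := by
      rw [Nat.cast_natAbs, Int.cast_abs]
    rw [h1]; ring
  simp_rw [key]
  have hr0 : 0 ≤ Real.exp (-a) := Real.exp_nonneg _
  have hr1 : Real.exp (-a) < 1 := by
    rw [Real.exp_lt_one_iff]; linarith
  apply Summable.of_nat_of_neg
  · simpa using summable_geometric_of_lt_one hr0 hr1
  · simpa using summable_geometric_of_lt_one hr0 hr1

lemma exp_ne_one_of_irrational {α : ℝ} (hirr : Irrational α) {k : ℤ} (hk : k ≠ 0) :
    ek k (α:ℂ) ≠ 1 := by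
  intro h
  rw [ek, Complex.exp_eq_one_iff] at h
  obtain ⟨n, hn⟩ := h
  have h2 : ((k:ℂ)) * (α:ℂ) = (n:ℂ) :=
    mul_right_cancel₀ Complex.two_pi_I_ne_zero (by linear_combination hn)
  have h3 : (k:ℝ) * α = (n:ℝ) := by exact_mod_cast h2
  exact (Irrational.intCast_mul hirr hk).ne_int n (by exact_mod_cast h3)

lemma liftIco_periodic_coe {f : ℝ → ℂ} (hf : Function.Periodic f 1) (x : ℝ) :
    AddCircle.liftIco (1:ℝ) 0 f ↑x = f x := by
  haveI : Fact ((0:ℝ) < 1) := ⟨one_pos⟩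
  have h1 : ((x : ℝ) : AddCircle (1:ℝ)) = ((Int.fract x : ℝ) : AddCircle (1:ℝ)) := by
    rw [QuotientAddGroup.eq, AddSubgroup.mem_zmultiples_iff]
    exact ⟨-⌊x⌋, by rw [show Int.fract x = x - ⌊x⌋ from rfl, zsmul_eq_mul]; push_cast; ring⟩
  rw [h1, AddCircle.liftIco_coe_apply
    (by simp [Int.fract_nonneg, Int.fract_lt_one] : Int.fract x ∈ Set.Ico (0:ℝ) (0+1))]
  have h2 := hf.sub_int_mul_eq (x := x) ⌊x⌋
  rw [mul_one] at h2
  rw [show Int.fract x = x - (⌊x⌋:ℝ) from rfl, h2]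

lemma contour_shift {v : ℂ → ℂ} {ε : ℝ}
    (hv : DifferentiableOn ℂ v {z : ℂ | |z.im| < ε})
    (hvper : ∀ z : ℂ, |z.im| < ε → v (z + 1) = v z)
    (k : ℤ) {y : ℝ} (hy : |y| < ε) :
    (∫ x in (0:ℝ)..1, v x * ek (-k) x)
      = ∫ x in (0:ℝ)..1, v (x + y * Complex.I) * ek (-k) (x + y * Complex.I) := by
  set f : ℂ → ℂ := fun z => v z * ek (-k) z with hf
  have hfsub : DifferentiableOn ℂ f
      (Set.uIcc (0:ℂ).re (1 + (y:ℂ)*Complex.I).re ×ℂ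
        Set.uIcc (0:ℂ).im (1 + (y:ℂ)*Complex.I).im) := by
    apply DifferentiableOn.mul (hv.mono ?_) ((differentiable_ek (-k)).differentiableOn)
    intro w hw
    rw [Complex.mem_reProdIm] at hw
    have h2 := hw.2
    simp only [Complex.zero_im, Complex.add_im, Complex.one_im, Complex.mul_im,
      Complex.ofReal_re, Complex.I_im, Complex.ofReal_im, Complex.I_re] at h2
    rw [Set.mem_uIcc] at h2
    have : |w.im| ≤ |y| := by
      rcases h2 with ⟨h3, h4⟩ | ⟨h3, h4⟩ <;> rw [abs_le] <;>
        constructor <;> nlinarith [le_abs_self y, neg_abs_le y]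
    exact lt_of_le_of_lt this hy
  have key := Complex.integral_boundary_rect_eq_zero_of_differentiableOn f 0
    (1 + (y:ℂ)*Complex.I) hfsub
  simp only [Complex.zero_re, Complex.zero_im, Complex.add_re, Complex.one_re,
    Complex.mul_re, Complex.ofReal_re, Complex.I_re, Complex.ofReal_im, Complex.I_im,
    Complex.add_im, Complex.one_im, Complex.mul_im] at key
  norm_num at key
  -- vertical sides cancel
  have hvert : (∫ t in (0:ℝ)..y, f (1 + t * Complex.I)) = ∫ t in (0:ℝ)..y, f (t * Complex.I) := by
    apply intervalIntegral.integral_congr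
    intro t ht
    rw [Set.mem_uIcc] at ht
    have htle : |t| < ε := by
      have : |t| ≤ |y| := by
        rcases ht with ⟨h3, h4⟩ | ⟨h3, h4⟩ <;> rw [abs_le] <;>
          constructor <;> nlinarith [le_abs_self y, neg_abs_le y]
      linarith
    have him : ((t:ℂ) * Complex.I).im = t := by simp
    show f (1 + (t:ℂ) * Complex.I) = f ((t:ℂ) * Complex.I)
    rw [show (1 : ℂ) + (t:ℂ) * Complex.I = ((t:ℂ) * Complex.I) + 1 by ring, hf]
    simp only
    rw [hvper _ (by rw [him]; exact htle), ek_add, ek_one, mul_one]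
  rw [hvert] at key
  have h9 : (∫ x in (0:ℝ)..1, f ↑x) = ∫ x in (0:ℝ)..1, f (↑x + ↑y * Complex.I) := by
    linear_combination key
  simpa only [hf] using h9

lemma coeff_bound {v : ℂ → ℂ} {ε V : ℝ}
    (hv : DifferentiableOn ℂ v {z : ℂ | |z.im| < ε})
    (hvb : ∀ z : ℂ, |z.im| < ε → ‖v z‖ ≤ V)
    (hvper : ∀ z : ℂ, |z.im| < ε → v (z + 1) = v z)
    (k : ℤ) {s : ℝ} (hs0 : 0 ≤ s) (hsε : s < ε) :
    ‖∫ x in (0:ℝ)..1, v x * ek (-k) x‖ ≤ V * Real.exp (-(2*Real.pi) * |(k:ℝ)| * s) := by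
  set y : ℝ := if 0 ≤ k then -s else s with hy
  have hay : |y| < ε := by
    rw [hy]; split
    · rw [abs_neg, _root_.abs_of_nonneg hs0]; exact hsε
    · rw [_root_.abs_of_nonneg hs0]; exact hsε
  rw [contour_shift hv hvper k hay]
  have hb : ∀ x ∈ Set.uIoc (0:ℝ) 1,
      ‖v (x + y*Complex.I) * ek (-k) (x + y*Complex.I)‖
        ≤ V * Real.exp (-(2*Real.pi) * |(k:ℝ)| * s) := by
    intro x hx
    rw [norm_mul, ek_norm]
    have him : ((x:ℂ) + (y:ℝ)*Complex.I).im = y := by simp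
    rw [him]
    have h1 : ‖v (x + y*Complex.I)‖ ≤ V := hvb _ (by rw [him]; exact hay)
    have h2 : -(2*Real.pi) * (((-k : ℤ)):ℝ) * y = -(2*Real.pi) * |(k:ℝ)| * s := by
      rw [hy]
      rcases le_or_gt 0 k with hk | hk
      · rw [if_pos hk, _root_.abs_of_nonneg (by exact_mod_cast hk : (0:ℝ) ≤ (k:ℝ))]
        push_cast; ring
      · rw [if_neg (not_le.mpr hk), _root_.abs_of_neg (by exact_mod_cast hk : ((k:ℝ) < 0))]
        push_cast; ring
    rw [h2]
    exact mul_le_mul_of_nonneg_right h1 (Real.exp_nonneg _)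
  have := intervalIntegral.norm_integral_le_of_norm_le_const hb
  simpa using this

lemma fourier_expand {v : ℂ → ℂ} {ε V : ℝ}
    (hv : DifferentiableOn ℂ v {z : ℂ | |z.im| < ε})
    (hvb : ∀ z : ℂ, |z.im| < ε → ‖v z‖ ≤ V)
    (hvper : ∀ z : ℂ, |z.im| < ε → v (z + 1) = v z)
    {z : ℂ} (hz : |z.im| < ε) :
    HasSum (fun k : ℤ => (∫ x in (0:ℝ)..1, v x * ek (-k) x) * ek k z) (v z) := by
  haveI : Fact ((0:ℝ) < 1) := ⟨one_pos⟩
  set y : ℝ := z.im with hyd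
  set cc : ℤ → ℂ := fun k => ∫ x in (0:ℝ)..1, v x * ek (-k) x with hcc
  have hopen : IsOpen {w : ℂ | |w.im| < ε} :=
    isOpen_lt (Complex.continuous_im.abs) continuous_const
  set fy : ℝ → ℂ := fun x : ℝ => v (x + (y:ℝ)*Complex.I) with hfy
  have hyst : ∀ x : ℝ, ((x:ℂ) + (y:ℝ)*Complex.I) ∈ {w : ℂ | |w.im| < ε} := by
    intro x; simp only [Set.mem_setOf_eq, Complex.add_im, Complex.ofReal_im]
    simpa using hz
  have hper : Function.Periodic fy 1 := by
    intro x
    rw [hfy]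
    simp only
    rw [show (((x+1 : ℝ)):ℂ) + (y:ℝ)*Complex.I = ((x:ℂ) + (y:ℝ)*Complex.I) + 1 by
      push_cast; ring]
    exact hvper _ (hyst x)
  have hcont : Continuous fy := by
    rw [continuous_iff_continuousAt]
    intro x
    exact ContinuousAt.comp ((hv.differentiableAt (hopen.mem_nhds (hyst x))).continuousAt)
      (by fun_prop : ContinuousAt (fun t : ℝ => (t:ℂ) + (y:ℝ)*Complex.I) x)
  set F : C(AddCircle (1:ℝ), ℂ) :=
    ⟨AddCircle.liftIco (1:ℝ) 0 fy, AddCircle.liftIco_continuous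
      (by simpa using (hper 0).symm) hcont.continuousOn⟩ with hFd
  have hF : ∀ x : ℝ, F ↑x = fy x := fun x => liftIco_periodic_coe hper x
  have hcoeff : ∀ k : ℤ, fourierCoeff (⇑F) k = cc k * ek k ((y:ℝ)*Complex.I) := by
    intro k
    have h1 : cc k = (∫ x in (0:ℝ)..1, fy x * ek (-k) ↑x) * ek (-k) ((y:ℝ)*Complex.I) := by
      rw [hcc]
      simp only
      rw [contour_shift hv hvper k (by simpa using hz), ← intervalIntegral.integral_mul_const]
      apply intervalIntegral.integral_congr
      intro x hx
      show v (↑x + (y:ℝ)*Complex.I) * ek (-k) (↑x + (y:ℝ)*Complex.I)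
        = fy x * ek (-k) ↑x * ek (-k) ((y:ℝ)*Complex.I)
      rw [ek_add]
      simp only [hfy]
      ring
    have h2 : fourierCoeff (⇑F) k = ∫ x in (0:ℝ)..1, fy x * ek (-k) ↑x := by
      rw [fourierCoeff_eq_intervalIntegral (⇑F) k 0]
      simp only [one_div_one, one_smul, zero_add]
      apply intervalIntegral.integral_congr
      intro x hx
      show fourier (-k) (↑x : AddCircle (1:ℝ)) • F ↑x = fy x * ek (-k) ↑x
      rw [hF x, smul_eq_mul, fourier_coe_apply]
      rw [show Complex.exp (2*Real.pi*Complex.I*((-k : ℤ):ℂ)*(x:ℂ)/((1:ℝ):ℂ)) = ek (-k) ↑x by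
        rw [ek]; norm_num]
      ring
    rw [h1, ← h2, mul_assoc, ek_neg_mul, mul_one]
  have hV : 0 ≤ V := le_trans (norm_nonneg _) (hvb z hz)
  set a : ℝ := Real.pi * (ε - |y|) with had
  have ha0 : 0 < a := by
    rw [had]; exact mul_pos Real.pi_pos (by linarith [hz])
  set s : ℝ := (|y| + ε)/2 with hsd
  have hs0 : 0 ≤ s := by rw [hsd]; have := abs_nonneg y; linarith [hz]
  have hsε : s < ε := by rw [hsd]; linarith [hz]
  have hsum : Summable (fourierCoeff (⇑F)) := by
    apply Summable.of_norm_bounded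
      ((summable_exp_neg_abs a ha0).mul_left V)
    intro k
    rw [hcoeff k, norm_mul, ek_norm]
    have him : (((y:ℝ):ℂ)*Complex.I).im = y := by simp
    rw [him]
    have hb1 : ‖cc k‖ ≤ V * Real.exp (-(2*Real.pi) * |(k:ℝ)| * s) :=
      coeff_bound hv hvb hvper k hs0 hsε
    have hb2 : Real.exp (-(2*Real.pi) * (k:ℝ) * y) ≤ Real.exp (2*Real.pi * |(k:ℝ)| * |y|) := by
      rw [Real.exp_le_exp]
      calc -(2*Real.pi) * (k:ℝ) * y ≤ |(-(2*Real.pi)) * (k:ℝ) * y| := le_abs_self _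
        _ = 2*Real.pi * |(k:ℝ)| * |y| := by
            rw [abs_mul, abs_mul, abs_neg, abs_of_pos Real.two_pi_pos]
    calc ‖cc k‖ * Real.exp (-(2*Real.pi) * (k:ℝ) * y)
        ≤ (V * Real.exp (-(2*Real.pi) * |(k:ℝ)| * s)) * Real.exp (2*Real.pi * |(k:ℝ)| * |y|) :=
          mul_le_mul hb1 hb2 (Real.exp_nonneg _) (by positivity)
      _ = V * Real.exp (-(2*Real.pi) * |(k:ℝ)| * s + 2*Real.pi * |(k:ℝ)| * |y|) := by
          rw [mul_assoc, ← Real.exp_add]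
      _ = V * Real.exp (-a * |(k:ℝ)|) := by
          congr 1
          rw [had, hsd]
          ring
  have hps := has_pointwise_sum_fourier_series_of_summable hsum ((z.re : ℝ) : AddCircle (1:ℝ))
  have hFx : F ((z.re : ℝ) : AddCircle (1:ℝ)) = v z := by
    rw [hF]
    simp only [hfy]
    rw [show ((z.re:ℂ) + (y:ℝ)*Complex.I : ℂ) = z by rw [hyd]; exact Complex.re_add_im z]
  have hterm : (fun k : ℤ => fourierCoeff (⇑F) k • fourier k ((z.re : ℝ) : AddCircle (1:ℝ)))
      = fun k : ℤ => cc k * ek k z := by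
    funext k
    rw [hcoeff, smul_eq_mul, fourier_coe_apply]
    rw [show Complex.exp (2*Real.pi*Complex.I*(k:ℂ)*(z.re:ℂ)/((1:ℝ):ℂ)) = ek k ↑z.re by
      rw [ek]; norm_num]
    rw [mul_assoc, ← ek_add]
    congr 2
    rw [add_comm]
    rw [hyd]
    exact Complex.re_add_im z
  rw [hterm, hFx] at hps
  exact hps

end CohomologicalAux

/-- Solution of the cohomological equation `h(z+α) − h(z) = v(z)` on a smaller
strip, under a small-divisor condition on `α`, unique up to an additive
constant. -/
theorem stmt9 (α : ℝ) (hirr : Irrational α) (ε δ : ℝ) (hδ : 0 < δ) (hδε : δ < ε)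
    (k₀ : ℕ)
    (hsd : ∀ k : ℤ, k₀ ≤ k.natAbs →
      Real.exp (-(2 * Real.pi) * |(k : ℝ)| * δ) <
        ‖Complex.exp (2 * Real.pi * Complex.I * k * α) - 1‖)
    (v : ℂ → ℂ) (V : ℝ)
    (hv : DifferentiableOn ℂ v {z : ℂ | |z.im| < ε})
    (hvb : ∀ z : ℂ, |z.im| < ε → ‖v z‖ ≤ V)
    (hvper : ∀ z : ℂ, |z.im| < ε → v (z + 1) = v z)
    (hmean : (∫ x in (0:ℝ)..1, v x) = 0) :
    ∀ ε' : ℝ, 0 < ε' → ε' < ε - δ →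
      ∃ h : ℂ → ℂ,
        DifferentiableOn ℂ h {z : ℂ | |z.im| < ε'} ∧
        (∀ z : ℂ, |z.im| < ε' → h (z + 1) = h z) ∧
        (∀ z : ℂ, |z.im| < ε' → h (z + α) - h z = v z) ∧
        (∀ h₂ : ℂ → ℂ,
          DifferentiableOn ℂ h₂ {z : ℂ | |z.im| < ε'} →
          (∀ z : ℂ, |z.im| < ε' → h₂ (z + 1) = h₂ z) →
          (∀ z : ℂ, |z.im| < ε' → h₂ (z + α) - h₂ z = v z) →
          ∃ c : ℂ, ∀ z : ℂ, |z.im| < ε' → h₂ z = h z + c) := by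
  intro ε' hε'0 hε'
  have hε0 : 0 < ε := lt_trans hδ hδε
  have hV : 0 ≤ V := le_trans (norm_nonneg _)
    (hvb 0 (by simpa using hε0))
  have hd0 : ∀ k : ℤ, k ≠ 0 → ek k (α:ℂ) - 1 ≠ 0 :=
    fun k hk => sub_ne_zero.mpr (exp_ne_one_of_irrational hirr hk)
  set cc : ℤ → ℂ := fun k => ∫ x in (0:ℝ)..1, v x * ek (-k) x with hcc
  set b : ℤ → ℂ := fun k => if k = 0 then 0 else cc k / (ek k (α:ℂ) - 1) with hb
  set u : ℤ → ℝ := fun k => ‖b k‖ * Real.exp (2*Real.pi * |(k:ℝ)| * ε') with hu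
  set s : ℝ := (ε + δ + ε')/2 with hsdef
  have hs1 : s < ε := by rw [hsdef]; linarith
  have hs2 : ε' < s - δ := by rw [hsdef]; linarith
  have hs0 : 0 ≤ s := by rw [hsdef]; linarith
  have hcb : ∀ k : ℤ, ‖cc k‖ ≤ V * Real.exp (-(2*Real.pi) * |(k:ℝ)| * s) :=
    fun k => coeff_bound hv hvb hvper k hs0 hs1
  have hopen' : IsOpen {z : ℂ | |z.im| < ε'} :=
    isOpen_lt (Complex.continuous_im.abs) continuous_const
  -- summability of the majorant
  have hu_sum : Summable u := by
    set a : ℝ := 2*Real.pi*(s - δ - ε') with ha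
    have ha0 : 0 < a := by
      rw [ha]; exact mul_pos Real.two_pi_pos (by linarith)
    apply Summable.of_norm_bounded_eventually
      ((summable_exp_neg_abs a ha0).mul_left V)
    rw [Filter.eventually_cofinite]
    have hfin : {k : ℤ | ¬ ((max k₀ 1 : ℕ) ≤ k.natAbs)}.Finite := by
      apply Set.Finite.subset (Set.finite_Icc (-(max k₀ 1 : ℕ) : ℤ) ((max k₀ 1 : ℕ) : ℤ))
      intro k hk
      simp only [Set.mem_setOf_eq, not_le] at hk
      simp only [Set.mem_Icc]
      omega
    apply hfin.subset
    intro k hk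
    simp only [Set.mem_setOf_eq] at hk ⊢
    intro hge
    apply hk
    have hk0 : k ≠ 0 := by
      intro h0
      rw [h0] at hge
      simp at hge
    have hkk₀ : (k₀ : ℕ) ≤ k.natAbs := le_trans (le_max_left _ _) hge
    have hdenlt := hsd k hkk₀
    have hbk : ‖b k‖ ≤ V * Real.exp (-(2*Real.pi) * |(k:ℝ)| * s)
        / Real.exp (-(2*Real.pi) * |(k:ℝ)| * δ) := by
      rw [hb]
      simp only [if_neg hk0, norm_div]
      apply div_le_div₀ (by positivity) (hcb k) (Real.exp_pos _)
      exact le_of_lt hdenlt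
    have huk : ‖u k‖ = u k := by
      rw [Real.norm_eq_abs, _root_.abs_of_nonneg]
      rw [hu]
      positivity
    rw [huk]
    have hrw : V * Real.exp (-a * |(k:ℝ)|)
        = (V * Real.exp (-(2*Real.pi) * |(k:ℝ)| * s)
            / Real.exp (-(2*Real.pi) * |(k:ℝ)| * δ)) * Real.exp (2*Real.pi * |(k:ℝ)| * ε') := by
      rw [div_mul_eq_mul_div, mul_assoc, ← Real.exp_add, eq_div_iff (Real.exp_ne_zero _),
        mul_assoc, ← Real.exp_add]
      congr 1
      rw [ha]
      ring
    rw [hu, hrw]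
    exact mul_le_mul_of_nonneg_right hbk (Real.exp_nonneg _)
  -- termwise bound on the strip
  have hterm_bound : ∀ (k : ℤ) (w : ℂ), w ∈ {z : ℂ | |z.im| < ε'} → ‖b k * ek k w‖ ≤ u k := by
    intro k w hw
    rw [norm_mul, hu]
    simp only
    apply mul_le_mul_of_nonneg_left ?_ (norm_nonneg _)
    rw [ek_norm, Real.exp_le_exp]
    have hw' : |w.im| < ε' := hw
    have h1 : |(k:ℝ)| * |w.im| ≤ |(k:ℝ)| * ε' :=
      mul_le_mul_of_nonneg_left (le_of_lt hw') (abs_nonneg _)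
    calc -(2*Real.pi) * (k:ℝ) * w.im ≤ |(-(2*Real.pi)) * (k:ℝ) * w.im| := le_abs_self _
      _ = 2*Real.pi * (|(k:ℝ)| * |w.im|) := by
          rw [abs_mul, abs_mul, abs_neg, _root_.abs_of_pos Real.two_pi_pos]; ring
      _ ≤ 2*Real.pi * (|(k:ℝ)| * ε') :=
          mul_le_mul_of_nonneg_left h1 (by positivity)
      _ = 2*Real.pi * |(k:ℝ)| * ε' := by ring
  set h : ℂ → ℂ := fun w => ∑' k : ℤ, b k * ek k w with hhdef
  have hhdiff : DifferentiableOn ℂ h {z : ℂ | |z.im| < ε'} :=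
    differentiableOn_tsum_of_summable_norm hu_sum
      (fun k => ((differentiable_ek k).const_mul (b k)).differentiableOn)
      hopen' hterm_bound
  have hhper : ∀ z : ℂ, h (z + 1) = h z := by
    intro z
    rw [hhdef]
    simp only
    apply tsum_congr
    intro k
    rw [ek_add, ek_one, mul_one]
  have hheq : ∀ z : ℂ, |z.im| < ε' → h (z + α) - h z = v z := by
    intro z hz
    have hz1 : (z + (α:ℂ)) ∈ {w : ℂ | |w.im| < ε'} := by
      simp only [Set.mem_setOf_eq, Complex.add_im, Complex.ofReal_im, add_zero]
      exact hz
    have hsummand : ∀ w : ℂ, w ∈ {z : ℂ | |z.im| < ε'} → Summable (fun k : ℤ => b k * ek k w) :=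
      fun w hw => Summable.of_norm_bounded hu_sum (fun k => hterm_bound k w hw)
    have H1 : HasSum (fun k : ℤ => b k * ek k (z + (α:ℂ))) (h (z + (α:ℂ))) :=
      (hsummand _ hz1).hasSum
    have H2 : HasSum (fun k : ℤ => b k * ek k z) (h z) :=
      (hsummand _ hz).hasSum
    have H3 := H1.sub H2
    have hterm : (fun k : ℤ => b k * ek k (z + (α:ℂ)) - b k * ek k z)
        = fun k : ℤ => cc k * ek k z := by
      funext k
      rw [ek_add]
      by_cases hk : k = 0
      · have hcc0 : cc 0 = 0 := by
          rw [hcc]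
          simp only [neg_zero, ek_zero, mul_one]
          exact hmean
        rw [hk]
        simp [hb, hcc0]
      · have hbd : b k * (ek k (α:ℂ) - 1) = cc k := by
          rw [hb]
          simp only [if_neg hk]
          exact div_mul_cancel₀ _ (hd0 k hk)
        rw [← hbd]
        ring
    rw [hterm] at H3
    have hzε : |z.im| < ε := lt_trans hz (by linarith)
    exact H3.unique (fourier_expand hv hvb hvper hzε)
  refine ⟨h, hhdiff, fun z _ => hhper z, hheq, ?_⟩
  -- uniqueness
  intro h₂ hd2 hp2 he2
  set g : ℂ → ℂ := fun w => h₂ w - h w with hg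
  have hgd : DifferentiableOn ℂ g {z : ℂ | |z.im| < ε'} := hd2.sub hhdiff
  have hgper1 : ∀ z : ℂ, |z.im| < ε' → g (z + 1) = g z := by
    intro z hz
    rw [hg]
    simp only
    rw [hp2 z hz, hhper z]
  have hgperα : ∀ z : ℂ, |z.im| < ε' → g (z + (α:ℂ)) = g z := by
    intro z hz
    have e1 := he2 z hz
    have e2 := hheq z hz
    rw [hg]
    simp only
    linear_combination e1 - e2
  set S : AddSubgroup ℝ :=
    { carrier := {t : ℝ | ∀ z : ℂ, |z.im| < ε' → g (z + (t:ℂ)) = g z}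
      zero_mem' := by intro z hz; simp
      add_mem' := by
        intro a b' ha hb' z hz
        have hza : |(z + (a:ℂ)).im| < ε' := by
          simpa only [Complex.add_im, Complex.ofReal_im, add_zero] using hz
        rw [show z + ((a + b' : ℝ):ℂ) = (z + (a:ℂ)) + (b':ℂ) by push_cast; ring,
          hb' _ hza, ha z hz]
      neg_mem' := by
        intro a ha z hz
        have hza : |(z - (a:ℂ)).im| < ε' := by
          simpa only [Complex.sub_im, Complex.ofReal_im, sub_zero] using hz
        have h5 := ha (z - (a:ℂ)) hza
        rw [sub_add_cancel] at h5
        rw [show z + ((-a : ℝ):ℂ) = z - (a:ℂ) by push_cast; ring]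
        exact h5.symm } with hS
  have h1S : (1:ℝ) ∈ S := by
    intro z hz
    rw [show (((1:ℝ)):ℂ) = 1 by norm_num]
    exact hgper1 z hz
  have hαS : α ∈ S := hgperα
  have hdense : Dense (S : Set ℝ) := by
    rcases S.dense_or_cyclic with hd | ⟨a, ha⟩
    · exact hd
    · exfalso
      rw [ha, AddSubgroup.mem_closure_singleton] at h1S hαS
      obtain ⟨m, hm⟩ := h1S
      obtain ⟨n, hn⟩ := hαS
      have hm0 : m ≠ 0 := by
        rintro rfl
        simp at hm
      have hma : (m:ℝ) * a = 1 := by rw [← hm, zsmul_eq_mul]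
      have hna : (n:ℝ) * a = α := by rw [← hn, zsmul_eq_mul]
      have hkey : (m:ℝ) * α = (n:ℝ) := by
        calc (m:ℝ) * α = (m:ℝ) * ((n:ℝ) * a) := by rw [hna]
          _ = (n:ℝ) * ((m:ℝ) * a) := by ring
          _ = (n:ℝ) := by rw [hma, mul_one]
      exact (Irrational.intCast_mul hirr hm0).ne_int n hkey
  have hgshift : ∀ z : ℂ, |z.im| < ε' → ∀ t : ℝ, g (z + (t:ℂ)) = g z := by
    intro z hz
    have hc : Continuous (fun t : ℝ => g (z + (t:ℂ))) := by
      rw [continuous_iff_continuousAt]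
      intro t
      have hmem : (z + (t:ℂ)) ∈ {w : ℂ | |w.im| < ε'} := by
        simpa only [Set.mem_setOf_eq, Complex.add_im, Complex.ofReal_im, add_zero] using hz
      have hcc : ContinuousAt (g ∘ (fun t : ℝ => z + (t:ℂ))) t :=
        ContinuousAt.comp ((hgd.differentiableAt (hopen'.mem_nhds hmem)).continuousAt)
          (by fun_prop : ContinuousAt (fun t : ℝ => z + (t:ℂ)) t)
      exact hcc
    have heqS : Set.EqOn (fun t : ℝ => g (z + (t:ℂ))) (fun _ : ℝ => g z) (S : Set ℝ) :=
      fun t ht => ht z hz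
    have := Continuous.ext_on hdense hc continuous_const heqS
    intro t
    exact congrFun this t
  have hfder : ∀ w ∈ {z : ℂ | |z.im| < ε'}, fderivWithin ℂ g {z : ℂ | |z.im| < ε'} w = 0 := by
    intro w hw
    have hdw : DifferentiableAt ℂ g w := hgd.differentiableAt (hopen'.mem_nhds hw)
    have hder0 : HasDerivAt (fun t : ℝ => g (w + (t:ℂ))) (deriv g w) 0 := by
      have h1 : HasDerivAt g (deriv g w) (w + ((0:ℝ):ℂ)) := by
        simpa using hdw.hasDerivAt
      have h2 : HasDerivAt (fun u : ℂ => g (w + u)) (deriv g w) ((0:ℝ):ℂ) := by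
        have h3 : HasDerivAt (fun u : ℂ => w + u) 1 ((0:ℝ):ℂ) :=
          (hasDerivAt_id _).const_add w
        simpa [Function.comp_def] using (h1.comp ((0:ℝ):ℂ) h3)
      exact h2.comp_ofReal
    have hconst : (fun t : ℝ => g (w + (t:ℂ))) = fun _ : ℝ => g w :=
      funext fun t => hgshift w hw t
    have hder_zero : deriv g w = 0 := by
      rw [hconst] at hder0
      exact hder0.unique (hasDerivAt_const 0 (g w))
    have hfd : HasFDerivAt g (0 : ℂ →L[ℂ] ℂ) w := by
      have hthis := hdw.hasDerivAt
      rw [hder_zero] at hthis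
      have h10 := hthis.hasFDerivAt
      exact h10.congr_fderiv (by ext; simp)
    rw [fderivWithin_of_isOpen hopen' hw]
    exact hfd.fderiv
  have hconv : Convex ℝ {z : ℂ | |z.im| < ε'} := by
    have heq : {z : ℂ | |z.im| < ε'} = Complex.imLm ⁻¹' (Set.Ioo (-ε') ε') := by
      ext w
      simp [abs_lt, Complex.imLm]
    rw [heq]
    exact (convex_Ioo _ _).linear_preimage _
  refine ⟨g 0, fun z hz => ?_⟩
  have h0mem : (0:ℂ) ∈ {z : ℂ | |z.im| < ε'} := by
    simpa using hε'0
  have hgz := hconv.is_const_of_fderivWithin_eq_zero hgd hfder hz h0mem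
  rw [hg] at hgz
  simp only at hgz
  rw [hg]
  simp only
  linear_combination hgz
end
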